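/- Let a, c_1, ..., c_n be positive reals and σ a permutation of {1,...,n}. If a ≥ max(n - 1, n - (c_1 c_2 ··· c_n)^(1/n)), then for all positive reals α_1, ..., α_n, Σ_{i=1}^{n} α_i / (a α_i + c_i α_{σ(i)}) ≤ 1. -/

import Mathlib

open Finset

lemma card_filter_pc (n k : ℕ) (i : Fin n) (hk : 1 ≤ k) :
    (((univ : Finset (Fin n)).powersetCard k).filter (fun S => i ∈ S)).card
      = (n-1).choose (k-1) := by
  have h1 : (((univ : Finset (Fin n)).erase i).powersetCard (k-1)).card
      = (n-1).choose (k-1) := by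
    rw [Finset.card_powersetCard, Finset.card_erase_of_mem (Finset.mem_univ i),
      Finset.card_univ, Fintype.card_fin]
  rw [← h1]
  refine Finset.card_bij' (fun S _ => S.erase i) (fun T _ => insert i T) ?_ ?_ ?_ ?_
  · intro S hS
    simp only [mem_filter, mem_powersetCard] at hS
    simp only [mem_powersetCard]
    exact ⟨Finset.erase_subset_erase i hS.1.1, by
      rw [Finset.card_erase_of_mem hS.2, hS.1.2]⟩
  · intro T hT
    simp only [mem_powersetCard] at hT
    have hi : i ∉ T := fun h => (Finset.mem_erase.mp (hT.1 h)).1 rfl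
    simp only [mem_filter, mem_powersetCard]
    refine ⟨⟨Finset.subset_univ _, ?_⟩, Finset.mem_insert_self i T⟩
    rw [Finset.card_insert_of_notMem hi, hT.2]
    omega
  · intro S hS
    simp only [mem_filter] at hS
    exact Finset.insert_erase hS.2
  · intro T hT
    simp only [mem_powersetCard] at hT
    exact Finset.erase_insert (fun h => (Finset.mem_erase.mp (hT.1 h)).1 rfl)

lemma prod_pc (n k : ℕ) (hk : 1 ≤ k) (t : Fin n → ℝ) :
    ∏ S ∈ (univ : Finset (Fin n)).powersetCard k, ∏ i ∈ S, t i
      = ∏ i, t i ^ ((n-1).choose (k-1)) := by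
  have h1 : ∀ S ∈ (univ : Finset (Fin n)).powersetCard k,
      ∏ i ∈ S, t i = ∏ i : Fin n, (if i ∈ S then t i else 1) := by
    intro S _
    rw [Finset.prod_ite_mem, Finset.univ_inter]
  rw [Finset.prod_congr rfl h1, Finset.prod_comm]
  apply Finset.prod_congr rfl
  intro i _
  rw [Finset.prod_ite, Finset.prod_const, Finset.prod_const, one_pow, mul_one]
  congr 1
  exact card_filter_pc n k i hk

lemma nat_id (n k : ℕ) (hk : k < n) : (n - k) * n.choose k = n * (n-1).choose k := by
  have h1 := Nat.choose_succ_right_eq n k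
  have h2 := Nat.add_one_mul_choose_eq (n-1) k
  have e : n - 1 + 1 = n := by omega
  rw [e] at h2
  calc (n - k) * n.choose k = n.choose k * (n - k) := mul_comm _ _
    _ = n.choose (k+1) * (k+1) := h1.symm
    _ = n * (n-1).choose k := h2.symm

lemma binom_id (n : ℕ) (hn : 1 ≤ n) (a b : ℝ) (hab : a + b = n) :
    ∑ k ∈ range (n+1), (a^(n-k) - ((n-k : ℕ):ℝ)*a^(n-1-k)) * ((n.choose k : ℝ) * b^k) = 0 := by
  have e1 : ∑ k ∈ range (n+1), a^(n-k) * ((n.choose k : ℝ) * b^k) = (b + a)^n := by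
    rw [add_pow]
    exact Finset.sum_congr rfl fun k _ => by ring
  have e2 : ∑ k ∈ range (n+1), ((n-k : ℕ):ℝ)*a^(n-1-k) * ((n.choose k : ℝ) * b^k)
      = n * (b + a)^(n-1) := by
    rw [Finset.sum_range_succ]
    simp only [Nat.sub_self, Nat.cast_zero, zero_mul, mul_zero, add_zero]
    have e3 : ∀ k ∈ range n, ((n-k : ℕ):ℝ)*a^(n-1-k) * ((n.choose k : ℝ) * b^k)
        = (n:ℝ) * (b^k * a^(n-1-k) * ((n-1).choose k : ℝ)) := by
      intro k hk
      rw [mem_range] at hk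
      have : ((n-k : ℕ):ℝ) * (n.choose k : ℝ) = (n:ℝ) * ((n-1).choose k : ℝ) := by
        have := nat_id n k hk
        exact_mod_cast congrArg (Nat.cast : ℕ → ℝ) this
      calc ((n-k : ℕ):ℝ)*a^(n-1-k) * ((n.choose k : ℝ) * b^k)
          = (((n-k : ℕ):ℝ) * (n.choose k : ℝ)) * (a^(n-1-k) * b^k) := by ring
        _ = ((n:ℝ) * ((n-1).choose k : ℝ)) * (a^(n-1-k) * b^k) := by rw [this]
        _ = (n:ℝ) * (b^k * a^(n-1-k) * ((n-1).choose k : ℝ)) := by ring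
    rw [Finset.sum_congr rfl e3, ← Finset.mul_sum]
    congr 1
    have e4 : n = (n-1) + 1 := by omega
    rw [add_pow]
    apply Finset.sum_congr
    · rw [← e4]
    · intro k hk; rfl
  rw [Finset.sum_congr rfl (fun k _ => by ring :
    ∀ k ∈ range (n+1), (a^(n-k) - ((n-k : ℕ):ℝ)*a^(n-1-k)) * ((n.choose k : ℝ) * b^k)
      = a^(n-k) * ((n.choose k : ℝ) * b^k) - ((n-k : ℕ):ℝ)*a^(n-1-k) * ((n.choose k : ℝ) * b^k)),
    Finset.sum_sub_distrib, e1, e2, add_comm b a, hab]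
  have e4 : ((n:ℝ))^n = (n:ℝ) * (n:ℝ)^(n-1) := by
    rw [← pow_succ']
    congr 1
    omega
  rw [e4]; ring

lemma maclaurin (n k : ℕ) (hn : 1 ≤ n) (hk : k ≤ n) (t : Fin n → ℝ) (ht : ∀ i, 0 < t i)
    (g : ℝ) (hg : 0 < g) (hprod : g ^ n ≤ ∏ i, t i) :
    (n.choose k : ℝ) * g ^ k ≤ ∑ S ∈ (univ : Finset (Fin n)).powersetCard k, ∏ i ∈ S, t i := by
  rcases Nat.eq_zero_or_pos k with rfl | hk1
  · simp [Finset.powersetCard_zero]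
  set P := (univ : Finset (Fin n)).powersetCard k with hP
  have hN : (0 : ℕ) < n.choose k := Nat.choose_pos hk
  have hcard : P.card = n.choose k := by
    rw [hP, Finset.card_powersetCard, Finset.card_univ, Fintype.card_fin]
  have hN0 : (0:ℝ) < (n.choose k : ℝ) := by exact_mod_cast hN
  have hmul : n * ((n-1).choose (k-1)) = n.choose k * k := by
    have := Nat.add_one_mul_choose_eq (n-1) (k-1)
    have e1 : n - 1 + 1 = n := by omega
    have e2 : k - 1 + 1 = k := by omega
    rwa [e1, e2] at this
  have base : ((g^k)^(n.choose k) : ℝ) ≤ ∏ S ∈ P, ∏ i ∈ S, t i := by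
    rw [hP, prod_pc n k hk1 t, Finset.prod_pow, ← pow_mul, mul_comm k, ← hmul, pow_mul]
    exact pow_le_pow_left₀ (by positivity) hprod _
  have amgm := Real.geom_mean_le_arith_mean_weighted P (fun _ => ((n.choose k : ℝ))⁻¹)
      (fun S => ∏ i ∈ S, t i) (fun _ _ => by positivity)
      (by rw [Finset.sum_const, hcard, nsmul_eq_mul]; field_simp)
      (fun S _ => Finset.prod_nonneg fun i _ => (ht i).le)
  rw [Real.finset_prod_rpow P _ (fun S _ => Finset.prod_nonneg fun i _ => (ht i).le)] at amgm
  have hgeom : (g ^ k : ℝ) ≤ (∏ S ∈ P, ∏ i ∈ S, t i) ^ ((n.choose k : ℝ))⁻¹ := by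
    have h2 := Real.rpow_le_rpow (by positivity) base (by positivity :
      (0:ℝ) ≤ ((n.choose k : ℝ))⁻¹)
    rwa [← Real.rpow_natCast (g^k) (n.choose k), ← Real.rpow_mul (by positivity),
      mul_inv_cancel₀ (ne_of_gt hN0), Real.rpow_one] at h2
  calc (n.choose k : ℝ) * g ^ k
      ≤ (n.choose k : ℝ) * ∑ S ∈ P, ((n.choose k : ℝ))⁻¹ * ∏ i ∈ S, t i :=
        mul_le_mul_of_nonneg_left (hgeom.trans amgm) hN0.le
    _ = ∑ S ∈ P, ∏ i ∈ S, t i := by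
        rw [← Finset.mul_sum, ← mul_assoc, mul_inv_cancel₀ (ne_of_gt hN0), one_mul]

lemma key (n : ℕ) (hn : 0 < n) (a : ℝ) (ha0 : 0 < a) (t : Fin n → ℝ) (ht : ∀ i, 0 < t i)
    (g : ℝ) (hg : 0 < g) (hprod : g ^ n ≤ ∏ i, t i)
    (ha1 : (n:ℝ) - 1 ≤ a) (hag : (n:ℝ) - g ≤ a) :
    ∑ i, 1 / (a + t i) ≤ 1 := by
  have hpos : ∀ j, 0 < a + t j := fun j => by linarith [ht j]
  have hProdPos : (0:ℝ) < ∏ j, (a + t j) := Finset.prod_pos fun j _ => hpos j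
  -- reduce to polynomial inequality
  have hred : ∑ i, 1 / (a + t i)
      = (∑ i, ∏ j ∈ univ.erase i, (a + t j)) / ∏ j, (a + t j) := by
    rw [Finset.sum_div]
    apply Finset.sum_congr rfl
    intro i _
    rw [eq_div_iff hProdPos.ne', ← Finset.mul_prod_erase univ (fun j => a + t j)
      (Finset.mem_univ i), ← mul_assoc, one_div, inv_mul_cancel₀ (hpos i).ne', one_mul]
  rw [hred, div_le_one hProdPos]
  -- expansions
  have hE : ∀ k, (∑ S ∈ (univ : Finset (Fin n)).powersetCard k, ∏ i ∈ S, t i)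
      = ∑ S ∈ (univ : Finset (Fin n)).powersetCard k, ∏ i ∈ S, t i := fun _ => rfl
  have hcard_mem : ∀ S ∈ (univ : Finset (Fin n)).powerset, S.card ∈ range (n+1) := by
    intro S hS
    rw [mem_range, Nat.lt_succ_iff]
    calc S.card ≤ (univ : Finset (Fin n)).card := Finset.card_le_card (Finset.mem_powerset.mp hS)
      _ = n := by rw [Finset.card_univ, Fintype.card_fin]
  have hfiber : ∀ (f : Finset (Fin n) → ℝ),
      ∑ S ∈ (univ : Finset (Fin n)).powerset, f S
        = ∑ k ∈ range (n+1), ∑ S ∈ (univ : Finset (Fin n)).powersetCard k, f S := by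
    intro f
    rw [← Finset.sum_fiberwise_of_maps_to hcard_mem f]
    exact Finset.sum_congr rfl fun k _ => Finset.sum_congr powersetCard_eq_filter.symm fun S _ => rfl
  have hRHS : ∏ j, (a + t j) = ∑ k ∈ range (n+1), a^(n-k) * ∑ S ∈ (univ : Finset (Fin n)).powersetCard k, ∏ i ∈ S, t i := by
    calc ∏ j, (a + t j) = ∏ j, (t j + a) := Finset.prod_congr rfl fun j _ => add_comm _ _
      _ = ∑ S ∈ (univ : Finset (Fin n)).powerset, (∏ i ∈ S, t i) * a^(n - S.card) := by
          rw [Finset.prod_add]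
          apply Finset.sum_congr rfl
          intro S hS
          rw [Finset.prod_const]
          congr 2
          rw [Finset.card_sdiff_of_subset (Finset.mem_powerset.mp hS), Finset.card_univ, Fintype.card_fin]
      _ = ∑ k ∈ range (n+1), ∑ S ∈ (univ : Finset (Fin n)).powersetCard k,
            (∏ i ∈ S, t i) * a^(n - S.card) := hfiber _
      _ = ∑ k ∈ range (n+1), a^(n-k) * ∑ S ∈ (univ : Finset (Fin n)).powersetCard k, ∏ i ∈ S, t i := by
          apply Finset.sum_congr rfl
          intro k _
          rw [Finset.mul_sum]
          apply Finset.sum_congr rfl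
          intro S hS
          rw [(Finset.mem_powersetCard.mp hS).2, mul_comm]
  have hLHS : ∑ i, ∏ j ∈ univ.erase i, (a + t j)
      = ∑ k ∈ range (n+1), ((n-k : ℕ):ℝ) * a^(n-1-k) * ∑ S ∈ (univ : Finset (Fin n)).powersetCard k, ∏ i ∈ S, t i := by
    have hstep : ∀ i : Fin n, ∏ j ∈ univ.erase i, (a + t j)
        = ∑ S ∈ (univ : Finset (Fin n)).powerset,
            (if i ∉ S then (∏ j ∈ S, t j) * a^(n - 1 - S.card) else 0) := by
      intro i
      have e0 : ∏ j ∈ univ.erase i, (a + t j) = ∏ j ∈ univ.erase i, (t j + a) :=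
        Finset.prod_congr rfl fun j _ => add_comm _ _
      rw [e0, Finset.prod_add]
      have e1 : (univ.erase i).powerset
          = (univ : Finset (Fin n)).powerset.filter (fun S => i ∉ S) := by
        ext S
        simp only [Finset.mem_powerset, Finset.mem_filter, Finset.subset_erase,
          Finset.subset_univ, true_and]
      rw [e1, Finset.sum_filter]
      apply Finset.sum_congr rfl
      intro S _
      by_cases hiS : i ∉ S
      · simp only [if_pos hiS]
        by_cases hSsub : S ⊆ univ.erase i
        · rw [Finset.prod_const]
          congr 2
          rw [Finset.card_sdiff_of_subset hSsub, Finset.card_erase_of_mem (Finset.mem_univ i),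
            Finset.card_univ, Fintype.card_fin]
        · exact absurd (Finset.subset_erase.mpr ⟨Finset.subset_univ S, hiS⟩) hSsub
      · simp only [if_neg hiS]
    calc ∑ i, ∏ j ∈ univ.erase i, (a + t j)
        = ∑ S ∈ (univ : Finset (Fin n)).powerset, ∑ i : Fin n,
            (if i ∉ S then (∏ j ∈ S, t j) * a^(n - 1 - S.card) else 0) := by
          rw [Finset.sum_congr rfl fun i _ => hstep i, Finset.sum_comm]
      _ = ∑ S ∈ (univ : Finset (Fin n)).powerset,
            ((n - S.card : ℕ):ℝ) * ((∏ j ∈ S, t j) * a^(n - 1 - S.card)) := by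
          apply Finset.sum_congr rfl
          intro S hS
          rw [Finset.sum_ite, Finset.sum_const, Finset.sum_const_zero, add_zero]
          have hcompl : Finset.filter (fun i => i ∉ S) univ = Sᶜ := by
            ext x; simp [Finset.mem_compl]
          rw [hcompl, Finset.card_compl, Fintype.card_fin, nsmul_eq_mul]
      _ = ∑ k ∈ range (n+1), ((n-k : ℕ):ℝ) * a^(n-1-k) * ∑ S ∈ (univ : Finset (Fin n)).powersetCard k, ∏ i ∈ S, t i := by
          rw [hfiber]
          apply Finset.sum_congr rfl
          intro k _
          rw [Finset.mul_sum]
          apply Finset.sum_congr rfl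
          intro S hS
          rw [(Finset.mem_powersetCard.mp hS).2]
          ring
  rw [hRHS, hLHS, ← sub_nonneg, ← Finset.sum_sub_distrib]
  have hw : ∀ k ∈ range (n+1),
      a^(n-k) * (∑ S ∈ (univ : Finset (Fin n)).powersetCard k, ∏ i ∈ S, t i)
        - ((n-k : ℕ):ℝ) * a^(n-1-k) * (∑ S ∈ (univ : Finset (Fin n)).powersetCard k, ∏ i ∈ S, t i)
      = (a^(n-k) - ((n-k : ℕ):ℝ) * a^(n-1-k))
          * (∑ S ∈ (univ : Finset (Fin n)).powersetCard k, ∏ i ∈ S, t i) := by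
    intro k _; ring
  rw [Finset.sum_congr rfl hw]
  have hEnn : ∀ k, (0:ℝ) ≤ ∑ S ∈ (univ : Finset (Fin n)).powersetCard k, ∏ i ∈ S, t i :=
    fun k => Finset.sum_nonneg fun S _ => Finset.prod_nonneg fun i _ => (ht i).le
  have hwpos : ∀ k, 1 ≤ k → k ≤ n → ((n:ℝ)) - a ≤ 1 →
      0 ≤ a^(n-k) - ((n-k : ℕ):ℝ) * a^(n-1-k) := by
    intro k hk1 hkn hb1
    rcases eq_or_lt_of_le hkn with rfl | hkn'
    · simp
    · have e1 : n - k = (n-1-k) + 1 := by omega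
      have e2 : ((n-k : ℕ):ℝ) = (n:ℝ) - k := by
        rw [Nat.cast_sub hkn]
      rw [e2, e1, pow_succ]
      have h3 : (n:ℝ) - k ≤ a := by
        have : (1:ℝ) ≤ k := by exact_mod_cast hk1
        linarith
      nlinarith [pow_nonneg ha0.le (n-1-k), pow_pos ha0 (n-1-k)]
  rcases le_or_gt (n:ℝ) a with hcase | hcase
  · apply Finset.sum_nonneg
    intro k hk
    rw [mem_range, Nat.lt_succ_iff] at hk
    rcases Nat.eq_zero_or_pos k with rfl | hk1
    · simp only [Nat.sub_zero]
      apply mul_nonneg _ (hEnn 0)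
      have e2 : ((n:ℕ):ℝ) * a^(n-1) ≤ a^n := by
        have e1 : n = (n-1) + 1 := by omega
        conv_rhs => rw [e1]
        rw [pow_succ, mul_comm (a^(n-1)) a]
        exact mul_le_mul_of_nonneg_right hcase (by positivity)
      linarith
    · exact mul_nonneg (hwpos k hk1 hk (by linarith)) (hEnn k)
  · set b : ℝ := (n:ℝ) - a with hbdef
    have hb0 : 0 < b := by simp [hbdef]; linarith
    have hb1 : b ≤ 1 := by simp only [hbdef]; linarith
    have hbg : b ≤ g := by simp only [hbdef]; linarith
    have hEk : ∀ k, k ≤ n → (n.choose k : ℝ) * b^k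
        ≤ ∑ S ∈ (univ : Finset (Fin n)).powersetCard k, ∏ i ∈ S, t i := by
      intro k hkn
      refine le_trans ?_ (maclaurin n k hn hkn t ht g hg hprod)
      exact mul_le_mul_of_nonneg_left (pow_le_pow_left₀ hb0.le hbg k) (by positivity)
    have hid := binom_id n hn a b (by simp [hbdef])
    rw [← hid]
    apply Finset.sum_le_sum
    intro k hk
    rw [mem_range, Nat.lt_succ_iff] at hk
    rcases Nat.eq_zero_or_pos k with rfl | hk1
    · apply le_of_eq
      have h1 : (Nat.choose n 0 : ℝ) * b^0 = 1 := by simp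
      have h2 : ∑ S ∈ (univ : Finset (Fin n)).powersetCard 0, ∏ i ∈ S, t i = 1 := by
        simp [Finset.powersetCard_zero]
      rw [h1, h2]
    · exact mul_le_mul_of_nonneg_left (hEk k hk) (hwpos k hk1 hk (by linarith))

theorem stmt4 (n : ℕ) (hn : 0 < n) (σ : Equiv.Perm (Fin n)) (a : ℝ) (c : Fin n → ℝ)
    (ha0 : 0 < a) (hc : ∀ i, 0 < c i)
    (ha : max ((n : ℝ) - 1) ((n : ℝ) - (∏ i, c i) ^ ((1 : ℝ) / n)) ≤ a)
    (α : Fin n → ℝ) (hα : ∀ i, 0 < α i) :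
    ∑ i, α i / (a * α i + c i * α (σ i)) ≤ 1 := by
  set t : Fin n → ℝ := fun i => c i * α (σ i) / α i with htdef
  have ht : ∀ i, 0 < t i := fun i => div_pos (mul_pos (hc i) (hα (σ i))) (hα i)
  have hPpos : (0:ℝ) < ∏ i, c i := Finset.prod_pos fun i _ => hc i
  set g : ℝ := (∏ i, c i) ^ ((1 : ℝ) / n) with hgdef
  have hgpos : 0 < g := Real.rpow_pos_of_pos hPpos _
  have hgn : g ^ n = ∏ i, c i := by
    rw [hgdef, ← Real.rpow_natCast ((∏ i, c i) ^ ((1 : ℝ) / n)) n,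
      ← Real.rpow_mul hPpos.le, one_div, inv_mul_cancel₀ (by exact_mod_cast hn.ne' :
        ((n:ℝ)) ≠ 0), Real.rpow_one]
  have hprodt : ∏ i, t i = ∏ i, c i := by
    simp only [htdef]
    rw [Finset.prod_div_distrib, Finset.prod_mul_distrib, Equiv.prod_comp σ α,
      mul_div_cancel_right₀ _ (ne_of_gt (Finset.prod_pos fun i _ => hα i))]
  have hterm : ∀ i, α i / (a * α i + c i * α (σ i)) = 1 / (a + t i) := by
    intro i
    have h1 : α i * (a + t i) = a * α i + c i * α (σ i) := by
      simp only [htdef]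
      rw [mul_add, mul_comm (α i) (c i * α (σ i) / α i),
        div_mul_cancel₀ _ (hα i).ne']
      ring
    rw [← h1, div_mul_cancel_left₀ (hα i).ne', one_div]
  rw [Finset.sum_congr rfl fun i _ => hterm i]
  exact key n hn a ha0 t ht g hgpos (le_of_eq (hgn.trans hprodt.symm))
    (le_trans (le_max_left _ _) ha) (le_trans (le_max_right _ _) ha)
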